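/- arXiv:1806.10180 — 6 statements merged into one kernel-verified Lean document; each statement's English description precedes it below -/
import Mathlib

section
/- For every κ ∈ (0,1), the second derivative of the function h ↦ s_{1/2,κ}(h) at the point h = 1/2 is strictly positive if and only if κ < e^{−2}. -/
noncomputable def s (m κ h : ℝ) : ℝ := m * κ ^ ((1 - h) ^ 2) + (1 - m) * κ ^ (h ^ 2)

lemma aux_rpow_deriv {κ : ℝ} (hκ : 0 < κ) {u : ℝ → ℝ} {u' x : ℝ}
    (hu : HasDerivAt u u' x) :
    HasDerivAt (fun y => κ ^ (u y)) (κ ^ (u x) * Real.log κ * u') x := by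
  exact ((Real.hasStrictDerivAt_const_rpow hκ (u x)).hasDerivAt).comp x hu

lemma deriv_s_eq {κ : ℝ} (hκ : 0 < κ) :
    deriv (fun h => s (1 / 2) κ h) =
      fun x => Real.log κ * (x * κ ^ (x ^ 2) - (1 - x) * κ ^ ((1 - x) ^ 2)) := by
  funext x
  have h1 : HasDerivAt (fun y : ℝ => (1 - y) ^ 2) (2 * (1 - x) ^ 1 * (-1)) x :=
    ((hasDerivAt_id x).const_sub 1).pow 2
  have h2 : HasDerivAt (fun y : ℝ => y ^ 2) (2 * x ^ 1 * 1) x :=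
    (hasDerivAt_id x).pow 2
  have H : HasDerivAt (fun h => s (1 / 2) κ h)
      ((1/2) * (κ ^ ((1 - x) ^ 2) * Real.log κ * (2 * (1 - x) ^ 1 * (-1))) +
       (1 - 1/2) * (κ ^ (x ^ 2) * Real.log κ * (2 * x ^ 1 * 1))) x := by
    exact ((aux_rpow_deriv hκ h1).const_mul (1/2)).add
      ((aux_rpow_deriv hκ h2).const_mul (1 - 1/2))
  rw [H.deriv]; ring

theorem second_derivative_positive_iff (κ : ℝ) (hκ : κ ∈ Set.Ioo (0 : ℝ) 1) :
    0 < deriv (deriv (fun h => s (1 / 2) κ h)) (1 / 2) ↔ κ < Real.exp (-2) := by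
  obtain ⟨hκ0, hκ1⟩ := hκ
  set L := Real.log κ with hL
  rw [deriv_s_eq hκ0]
  have h2 : HasDerivAt (fun y : ℝ => y ^ 2) (2 * (1/2 : ℝ) ^ 1 * 1) (1/2) :=
    (hasDerivAt_id _).pow 2
  have h1 : HasDerivAt (fun y : ℝ => (1 - y) ^ 2) (2 * (1 - 1/2 : ℝ) ^ 1 * (-1)) (1/2) :=
    ((hasDerivAt_id _).const_sub 1).pow 2
  have hA : HasDerivAt (fun x : ℝ => x * κ ^ (x ^ 2))
      (1 * κ ^ ((1/2 : ℝ) ^ 2) + (1/2) * (κ ^ ((1/2 : ℝ) ^ 2) * L * (2 * (1/2 : ℝ) ^ 1 * 1))) (1/2) :=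
    (hasDerivAt_id _).mul (aux_rpow_deriv hκ0 h2)
  have hB : HasDerivAt (fun x : ℝ => (1 - x) * κ ^ ((1 - x) ^ 2))
      ((-1) * κ ^ ((1 - (1/2 : ℝ)) ^ 2) +
        (1 - 1/2) * (κ ^ ((1 - (1/2 : ℝ)) ^ 2) * L * (2 * (1 - (1/2 : ℝ)) ^ 1 * (-1)))) (1/2) :=
    ((hasDerivAt_id _).const_sub 1).mul (aux_rpow_deriv hκ0 h1)
  have H : HasDerivAt (fun x : ℝ => L * (x * κ ^ (x ^ 2) - (1 - x) * κ ^ ((1 - x) ^ 2)))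
      (L * ((1 * κ ^ ((1/2 : ℝ) ^ 2) + (1/2) * (κ ^ ((1/2 : ℝ) ^ 2) * L * (2 * (1/2 : ℝ) ^ 1 * 1))) -
        ((-1) * κ ^ ((1 - (1/2 : ℝ)) ^ 2) +
          (1 - 1/2) * (κ ^ ((1 - (1/2 : ℝ)) ^ 2) * L * (2 * (1 - (1/2 : ℝ)) ^ 1 * (-1)))))) (1/2) :=
    (hA.sub hB).const_mul L
  rw [H.deriv]
  have he : (1 - (1/2 : ℝ)) ^ 2 = (1/2 : ℝ) ^ 2 := by norm_num
  rw [he]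
  have hq : (0 : ℝ) < κ ^ ((1/2 : ℝ) ^ 2) := Real.rpow_pos_of_pos hκ0 _
  have hLneg : L < 0 := Real.log_neg hκ0 hκ1
  have key : L * ((1 * κ ^ ((1/2 : ℝ) ^ 2) + (1/2) * (κ ^ ((1/2 : ℝ) ^ 2) * L * (2 * (1/2 : ℝ) ^ 1 * 1))) -
        ((-1) * κ ^ ((1/2 : ℝ) ^ 2) +
          (1 - 1/2) * (κ ^ ((1/2 : ℝ) ^ 2) * L * (2 * (1 - (1/2 : ℝ)) ^ 1 * (-1))))) =
      κ ^ ((1/2 : ℝ) ^ 2) * (L * (L + 2)) := by ring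
  rw [key]
  constructor
  · intro hpos
    have hLL : 0 < L * (L + 2) := by
      by_contra hc
      push_neg at hc
      nlinarith
    have : L + 2 < 0 := by nlinarith
    have : L < -2 := by linarith
    calc κ = Real.exp L := (Real.exp_log hκ0).symm
    _ < Real.exp (-2) := Real.exp_lt_exp.2 this
  · intro hlt
    have : L < -2 := by
      have := Real.log_lt_log hκ0 hlt
      rwa [Real.log_exp] at this
    have hLL : 0 < L * (L + 2) := by nlinarith
    exact mul_pos hq hLL
end

section
/- For every κ ∈ (0, e^{−2}), the point h = 1/2 is a strict local minimum of the function h ↦ s_{1/2,κ}(h); in particular, h = 1/2 is not a maximizer of s_{1/2,κ} on [0,1]. -/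
open Real Filter

lemma sinh_sq_ge (x : ℝ) : x ^ 2 ≤ Real.sinh x ^ 2 := by
  rcases le_or_gt 0 x with hx | hx
  · have h1 : x ≤ Real.sinh x := Real.self_le_sinh_iff.2 hx
    exact pow_le_pow_left₀ hx h1 2
  · have h1 : -x ≤ Real.sinh (-x) := Real.self_le_sinh_iff.2 (by linarith)
    rw [Real.sinh_neg] at h1
    nlinarith

lemma two_add_sq_le_exp (t : ℝ) : 2 + t ^ 2 ≤ Real.exp t + Real.exp (-t) := by
  have h2 : Real.cosh (t / 2) ^ 2 = Real.sinh (t / 2) ^ 2 + 1 := Real.cosh_sq (t / 2)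
  have h1 : Real.cosh t = 1 + 2 * Real.sinh (t / 2) ^ 2 := by
    have := Real.cosh_two_mul (t / 2)
    rw [show 2 * (t / 2) = t by ring] at this
    rw [this]
    nlinarith
  have h3 : (t / 2) ^ 2 ≤ Real.sinh (t / 2) ^ 2 := sinh_sq_ge _
  have h4 : Real.exp t + Real.exp (-t) = 2 * Real.cosh t := by
    rw [Real.cosh_eq]; ring
  nlinarith

lemma key (κ : ℝ) (hκ0 : 0 < κ) (hL : Real.log κ < -2) :
    ∃ ε > 0, ∀ h : ℝ, h ≠ (1 / 2 : ℝ) → |h - 1 / 2| < ε →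
      s (1 / 2) κ (1 / 2) < s (1 / 2) κ h := by
  set L := Real.log κ with hLdef
  have hLne : L ≠ 0 := by linarith
  have hL2 : (0:ℝ) < L ^ 2 := by positivity
  have hc : 0 < (-L - 2) / L ^ 2 := by
    apply div_pos (by linarith) hL2
  refine ⟨Real.sqrt ((-L - 2) / L ^ 2), Real.sqrt_pos.2 hc, fun h hne hd => ?_⟩
  set x := h - 1 / 2 with hxdef
  have hx0 : x ≠ 0 := sub_ne_zero.2 hne
  have hxsq : 0 < x ^ 2 := by positivity
  have hxc : x ^ 2 * L ^ 2 < -L - 2 := by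
    have : |x| ^ 2 < Real.sqrt ((-L - 2) / L ^ 2) ^ 2 :=
      pow_lt_pow_left₀ hd (abs_nonneg x) (by norm_num)
    rw [sq_abs, Real.sq_sqrt hc.le] at this
    calc x ^ 2 * L ^ 2 < (-L - 2) / L ^ 2 * L ^ 2 :=
          mul_lt_mul_of_pos_right this hL2
      _ = -L - 2 := div_mul_cancel₀ _ (ne_of_gt hL2)
  -- rewrite s in terms of exp
  have hrpow : ∀ t : ℝ, κ ^ t = Real.exp (L * t) := fun t => by
    rw [Real.rpow_def_of_pos hκ0]
  have hs1 : s (1 / 2) κ (1 / 2) = Real.exp (L / 4) := by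
    simp only [s, hrpow]
    norm_num
    rw [show L * (1 / 4 : ℝ) = L / 4 by ring]
    ring
  have hs2 : s (1 / 2) κ h =
      Real.exp (L / 4) * Real.exp (L * x ^ 2) *
        ((Real.exp (L * x) + Real.exp (-(L * x))) / 2) := by
    simp only [s, hrpow]
    rw [show L * (1 - h) ^ 2 = L / 4 + L * x ^ 2 + -(L * x) by rw [hxdef]; ring,
      show L * h ^ 2 = L / 4 + L * x ^ 2 + L * x by rw [hxdef]; ring,
      Real.exp_add, Real.exp_add, Real.exp_add, Real.exp_add]
    ring
  rw [hs1, hs2]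
  have hA : 1 + L * x ^ 2 ≤ Real.exp (L * x ^ 2) := by
    have := Real.add_one_le_exp (L * x ^ 2); linarith
  have hApos : 0 < 1 + L * x ^ 2 := by nlinarith
  have hB : 2 + (L * x) ^ 2 ≤ Real.exp (L * x) + Real.exp (-(L * x)) := two_add_sq_le_exp _
  have hBpos : (0:ℝ) < 2 + (L * x) ^ 2 := by positivity
  have hprod : (1 + L * x ^ 2) * (2 + (L * x) ^ 2) ≤
      Real.exp (L * x ^ 2) * (Real.exp (L * x) + Real.exp (-(L * x))) :=
    mul_le_mul hA hB hBpos.le (le_trans hApos.le hA)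
  have hneg : L + 2 + L ^ 2 * x ^ 2 < 0 := by nlinarith
  have hfac : 0 < L * (L + 2 + L ^ 2 * x ^ 2) :=
    mul_pos_of_neg_of_neg (by linarith) hneg
  have h2lt : 2 < (1 + L * x ^ 2) * (2 + (L * x) ^ 2) := by
    nlinarith [mul_pos hxsq hfac]
  have hE : 0 < Real.exp (L / 4) := Real.exp_pos _
  nlinarith [mul_lt_mul_of_pos_left (h2lt.trans_le hprod) hE]

theorem half_is_strict_local_min (κ : ℝ) (hκ : κ ∈ Set.Ioo 0 (Real.exp (-2))) :
    (∀ᶠ h in nhdsWithin (1 / 2 : ℝ) {(1 / 2 : ℝ)}ᶜ,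
      s (1 / 2) κ (1 / 2) < s (1 / 2) κ h) ∧
    ¬ IsMaxOn (s (1 / 2) κ) (Set.Icc 0 1) (1 / 2) := by
  obtain ⟨hκ0, hκ1⟩ := hκ
  have hL : Real.log κ < -2 := by
    have := Real.log_lt_log hκ0 hκ1
    rwa [Real.log_exp] at this
  obtain ⟨ε, hε, hkey⟩ := key κ hκ0 hL
  have hev : ∀ᶠ h in nhdsWithin (1 / 2 : ℝ) {(1 / 2 : ℝ)}ᶜ,
      s (1 / 2) κ (1 / 2) < s (1 / 2) κ h := by
    rw [eventually_nhdsWithin_iff]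
    rw [Metric.eventually_nhds_iff]
    exact ⟨ε, hε, fun y hy hne => hkey y hne (by simpa [Real.dist_eq] using hy)⟩
  refine ⟨hev, fun hmax => ?_⟩
  have hIcc : Set.Icc (0:ℝ) 1 ∈ nhdsWithin (1 / 2 : ℝ) {(1 / 2 : ℝ)}ᶜ :=
    mem_nhdsWithin_of_mem_nhds (Icc_mem_nhds (by norm_num) (by norm_num))
  obtain ⟨y, hy1, hy2⟩ := (hev.and (eventually_of_mem hIcc fun y hy => hy)).exists
  exact absurd (hmax hy2) (not_le.2 hy1)
end

section
/- For every κ ∈ (0, e^{−2}), the function s_{1/2,κ} attains its maximum over [0,1] at two distinct points; more precisely, there exists h* ∈ [0,1] with h* ≠ 1/2 such that both h* and 1−h* are maximizers of s_{1/2,κ} on [0,1] (the function has two modes). -/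
lemma s_exp (κ : ℝ) (hκ0 : 0 < κ) (h : ℝ) :
    s (1 / 2) κ h = 1 / 2 * Real.exp ((1 - h) ^ 2 * Real.log κ)
      + 1 / 2 * Real.exp (h ^ 2 * Real.log κ) := by
  simp [s, Real.rpow_def_of_pos hκ0]
  ring

lemma key_s6 (κ : ℝ) (hκ0 : 0 < κ) (hκe : κ < Real.exp (-2)) :
    ∃ w ∈ Set.Icc (0 : ℝ) 1, s (1 / 2) κ (1 / 2) < s (1 / 2) κ w := by
  set c : ℝ := -Real.log κ with hc_def
  have hlog : Real.log κ = -c := by rw [hc_def]; ring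
  have hc : 2 < c := by
    have : Real.log κ < -2 := by
      calc Real.log κ < Real.log (Real.exp (-2)) := Real.log_lt_log hκ0 hκe
        _ = -2 := Real.log_exp _
    linarith [this]
  set t : ℝ := Real.sqrt (c - 2) / (2 * c) with ht_def
  have hc0 : (0:ℝ) < c := by linarith
  have hsq : Real.sqrt (c - 2) ^ 2 = c - 2 := Real.sq_sqrt (by linarith)
  have ht0 : 0 < t := by
    apply div_pos (Real.sqrt_pos.2 (by linarith)) (by linarith)
  have ht_half : t ≤ 1 / 2 := by
    rw [ht_def, div_le_div_iff₀ (by linarith) (by norm_num)]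
    have h1 : Real.sqrt (c - 2) ≤ c := by
      calc Real.sqrt (c - 2) ≤ Real.sqrt (c ^ 2) := by
            apply Real.sqrt_le_sqrt; nlinarith
        _ = c := by rw [Real.sqrt_sq hc0.le]
    linarith
  have ht2 : t ^ 2 = (c - 2) / (4 * c ^ 2) := by
    rw [ht_def, div_pow, hsq]; ring
  refine ⟨1 / 2 + t, ⟨by linarith, by linarith⟩, ?_⟩
  rw [s_exp κ hκ0, s_exp κ hκ0, hlog]
  set x : ℝ := c * t with hx_def
  set y : ℝ := c * t ^ 2 with hy_def
  have hx0 : 0 < x := mul_pos hc0 ht0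
  have hxsq : x ^ 2 = (c - 2) / 4 := by
    rw [hx_def, mul_pow, ht2]; field_simp
  have hy0 : 0 < y := mul_pos hc0 (by positivity)
  have hcy : c * y = x ^ 2 := by rw [hy_def, hx_def]; ring
  have hy1 : 2 * y < 1 := by
    have : y = (c - 2) / (4 * c) := by rw [hy_def, ht2]; field_simp
    rw [this, mul_div_assoc', div_lt_one (by linarith)]; linarith
  -- cosh x > exp y
  have hcosh : Real.exp y < Real.cosh x := by
    have h1 : Real.exp y ^ 2 = Real.exp (2 * y) := by
      rw [← Real.exp_nat_mul]; norm_num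
    have h2 : Real.exp (2 * y) * (1 - 2 * y) ≤ 1 := by
      calc Real.exp (2 * y) * (1 - 2 * y) ≤ Real.exp (2 * y) * Real.exp (-(2 * y)) := by
            apply mul_le_mul_of_nonneg_left _ (Real.exp_pos _).le
            linarith [Real.add_one_le_exp (-(2 * y))]
        _ = 1 := by rw [← Real.exp_add]; simp
    have h3 : Real.exp (2 * y) < 1 + x ^ 2 := by
      have hpos : 0 < 1 - 2 * y := by linarith
      calc Real.exp (2 * y) ≤ 1 / (1 - 2 * y) := by
            rw [le_div_iff₀ hpos]; exact h2
        _ < 1 + x ^ 2 := by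
            rw [div_lt_iff₀ hpos]
            have : x ^ 2 = c * y := hcy.symm
            nlinarith [hxsq, hy0]
    have h4 : 1 + x ^ 2 ≤ Real.cosh x ^ 2 := by
      rw [Real.cosh_sq]
      have : x ≤ Real.sinh x := Real.self_le_sinh_iff.2 hx0.le
      nlinarith
    have h5 : Real.exp y ^ 2 < Real.cosh x ^ 2 := by
      rw [h1]; linarith
    exact lt_of_pow_lt_pow_left₀ 2 (le_of_lt (Real.cosh_pos (x := x))) h5
  -- now compute
  have e1 : (1 - (1 / 2 + t)) ^ 2 * (-c) = -(c / 4) - y + x := by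
    rw [hx_def, hy_def]; ring
  have e2 : (1 / 2 + t) ^ 2 * (-c) = -(c / 4) - y - x := by
    rw [hx_def, hy_def]; ring
  have e3 : (1 - (1:ℝ) / 2) ^ 2 * (-c) = -(c / 4) := by ring
  have e4 : ((1:ℝ) / 2) ^ 2 * (-c) = -(c / 4) := by ring
  rw [e1, e2, e3, e4]
  have : 1 / 2 * Real.exp (-(c / 4) - y + x) + 1 / 2 * Real.exp (-(c / 4) - y - x)
      = Real.exp (-(c / 4) - y) * Real.cosh x := by
    rw [Real.cosh_eq, show -(c/4) - y + x = (-(c/4) - y) + x by ring,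
      show -(c/4) - y - x = (-(c/4) - y) + (-x) by ring, Real.exp_add, Real.exp_add]
    ring
  rw [this]
  calc 1 / 2 * Real.exp (-(c / 4)) + 1 / 2 * Real.exp (-(c / 4))
      = Real.exp (-(c / 4) - y) * Real.exp y := by
        rw [← Real.exp_add]; ring_nf
    _ < Real.exp (-(c / 4) - y) * Real.cosh x := by
        exact mul_lt_mul_of_pos_left hcosh (Real.exp_pos _)

theorem two_modes (κ : ℝ) (hκ : κ ∈ Set.Ioo 0 (Real.exp (-2))) :
    ∃ h : ℝ, h ∈ Set.Icc (0 : ℝ) 1 ∧ h ≠ 1 / 2 ∧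
      IsMaxOn (s (1 / 2) κ) (Set.Icc 0 1) h ∧
      IsMaxOn (s (1 / 2) κ) (Set.Icc 0 1) (1 - h) := by
  obtain ⟨hκ0, hκe⟩ := hκ
  have hcont : ContinuousOn (s (1 / 2) κ) (Set.Icc 0 1) := by
    have : s (1 / 2) κ = fun h => 1 / 2 * Real.exp ((1 - h) ^ 2 * Real.log κ)
        + 1 / 2 * Real.exp (h ^ 2 * Real.log κ) := funext (s_exp κ hκ0)
    rw [this]
    fun_prop
  obtain ⟨h₀, h₀mem, hmax⟩ := isCompact_Icc.exists_isMaxOn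
    (Set.nonempty_Icc.2 (by norm_num)) hcont
  have hsymm : ∀ u : ℝ, s (1 / 2) κ (1 - u) = s (1 / 2) κ u := by
    intro u
    simp only [s, show (1 : ℝ) - (1 - u) = u by ring]
    ring
  have hne : h₀ ≠ 1 / 2 := by
    intro h
    obtain ⟨w, hw, hlt⟩ := key_s6 κ hκ0 hκe
    have := hmax hw
    rw [h] at this
    exact absurd this (not_le.2 hlt)
  refine ⟨h₀, h₀mem, hne, hmax, ?_⟩
  intro u hu
  calc s (1 / 2) κ u ≤ s (1 / 2) κ h₀ := hmax hu
    _ = s (1 / 2) κ (1 - h₀) := (hsymm h₀).symm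
end

section
/- For every m ∈ (0,1) and κ ∈ (0,1), every maximizer of s_{m,κ} over the interval [0,1] lies in the open interval (0,1); i.e., if h* ∈ [0,1] satisfies s_{m,κ}(h*) ≥ s_{m,κ}(h) for all h ∈ [0,1], then 0 < h* < 1 (the optimal merge point of two support vectors with equal labels is a strict convex combination). -/
lemma s_hasDerivAt (m κ : ℝ) (hκ : 0 < κ) (a : ℝ) :
    HasDerivAt (s m κ)
      (m * (Real.exp (Real.log κ * (1 - a) ^ 2) *
        (Real.log κ * (2 * (1 - a) ^ 1 * (0 - 1)))) +
       (1 - m) * (Real.exp (Real.log κ * a ^ 2) *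
        (Real.log κ * (2 * a ^ 1 * 1)))) a := by
  have hrw : s m κ = fun x =>
      m * Real.exp (Real.log κ * (1 - x) ^ 2) +
      (1 - m) * Real.exp (Real.log κ * x ^ 2) := by
    funext x
    simp [s, Real.rpow_def_of_pos hκ]
  rw [hrw]
  have h1 : HasDerivAt (fun x : ℝ => (1 - x) ^ 2) (2 * (1 - a) ^ 1 * (0 - 1)) a :=
    ((hasDerivAt_const a (1:ℝ)).sub (hasDerivAt_id a)).pow 2
  have h2 : HasDerivAt (fun x : ℝ => x ^ 2) (2 * a ^ 1 * 1) a :=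
    (hasDerivAt_id a).pow 2
  exact ((((h1.const_mul (Real.log κ)).exp).const_mul m)).add
    ((((h2.const_mul (Real.log κ)).exp).const_mul (1 - m)))

theorem maximizer_is_interior (m κ : ℝ)
    (hm : m ∈ Set.Ioo (0 : ℝ) 1) (hκ : κ ∈ Set.Ioo (0 : ℝ) 1)
    (h : ℝ) (hh : h ∈ Set.Icc (0 : ℝ) 1)
    (hmax : ∀ h' ∈ Set.Icc (0 : ℝ) 1, s m κ h' ≤ s m κ h) :
    h ∈ Set.Ioo (0 : ℝ) 1 := by
  obtain ⟨hm0, hm1⟩ := hm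
  obtain ⟨hκ0, hκ1⟩ := hκ
  have hlog : Real.log κ < 0 := Real.log_neg hκ0 hκ1
  have hmaxOn : IsMaxOn (s m κ) (Set.Icc (0:ℝ) 1) h := fun x hx => hmax x hx
  constructor
  · rcases lt_or_eq_of_le hh.1 with h0 | h0
    · exact h0
    · exfalso
      subst h0
      have hd := s_hasDerivAt m κ hκ0 0
      have hcone : (1:ℝ) ∈ posTangentConeAt (Set.Icc (0:ℝ) 1) 0 := by
        have := sub_mem_posTangentConeAt_of_segment_subset
          (x := (0:ℝ)) (y := 1) (s := Set.Icc (0:ℝ) 1) (by rw [segment_eq_Icc zero_le_one])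
        simpa using this
      have := hmaxOn.localize.hasFDerivWithinAt_nonpos
        hd.hasDerivWithinAt.hasFDerivWithinAt hcone
      simp only [ContinuousLinearMap.smulRight_apply, ContinuousLinearMap.one_apply, ContinuousLinearMap.toSpanSingleton_apply,
        one_smul] at this
      norm_num at this
      rw [Real.exp_log hκ0] at this
      nlinarith [mul_pos hm0 hκ0]
  · rcases lt_or_eq_of_le hh.2 with h1 | h1
    · exact h1
    · exfalso
      subst h1
      have hd := s_hasDerivAt m κ hκ0 1
      have hcone : (-1:ℝ) ∈ posTangentConeAt (Set.Icc (0:ℝ) 1) 1 := by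
        have := sub_mem_posTangentConeAt_of_segment_subset
          (x := (1:ℝ)) (y := 0) (s := Set.Icc (0:ℝ) 1)
          (by rw [segment_symm, segment_eq_Icc zero_le_one])
        simpa using this
      have := hmaxOn.localize.hasFDerivWithinAt_nonpos
        hd.hasDerivWithinAt.hasFDerivWithinAt hcone
      simp only [ContinuousLinearMap.smulRight_apply, ContinuousLinearMap.one_apply, ContinuousLinearMap.toSpanSingleton_apply,
        neg_smul, one_smul] at this
      norm_num at this
      rw [Real.exp_log hκ0] at this
      nlinarith [mul_pos (by linarith : (0:ℝ) < 1 - m) hκ0]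
end

section
/- For every m ∈ [0,1] and κ ∈ (e^{−2}, 1), the function s_{m,κ} has a unique maximizer on [0,1]: there exists exactly one h* ∈ [0,1] such that s_{m,κ}(h*) ≥ s_{m,κ}(h) for all h ∈ [0,1] (the function has a single mode for κ > e^{−2}). -/
open Real Set

/-- A function that is strictly increasing up to `a` and strictly decreasing afterwards
has a unique maximizer on `[0,1]`. -/
lemma unimodal_unique {f : ℝ → ℝ} {a : ℝ} (ha0 : 0 ≤ a) (ha1 : a ≤ 1)
    (h1 : StrictMonoOn f (Icc 0 a)) (h2 : StrictAntiOn f (Icc a 1)) :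
    ∃! h : ℝ, h ∈ Icc (0:ℝ) 1 ∧ ∀ h' ∈ Icc (0:ℝ) 1, f h' ≤ f h := by
  have hmax : ∀ h' ∈ Icc (0:ℝ) 1, f h' ≤ f a := by
    rintro x ⟨hx0, hx1⟩
    rcases le_total x a with h | h
    · rcases eq_or_lt_of_le h with rfl | h
      · exact le_refl _
      · exact (h1 ⟨hx0, h.le⟩ ⟨ha0, le_refl a⟩ h).le
    · rcases eq_or_lt_of_le h with rfl | h
      · exact le_refl _
      · exact (h2 ⟨le_refl a, ha1⟩ ⟨h.le, hx1⟩ h).le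
  refine ⟨a, ⟨⟨ha0, ha1⟩, hmax⟩, ?_⟩
  rintro b ⟨⟨hb0, hb1⟩, hbmax⟩
  by_contra hne
  rcases lt_or_gt_of_ne hne with h | h
  · exact absurd (hbmax a ⟨ha0, ha1⟩) (not_le.2 (h1 ⟨hb0, h.le⟩ ⟨ha0, le_refl a⟩ h))
  · exact absurd (hbmax a ⟨ha0, ha1⟩) (not_le.2 (h2 ⟨le_refl a, ha1⟩ ⟨h.le, hb1⟩ h))

theorem unique_maximizer (m κ : ℝ)
    (hm : m ∈ Set.Icc (0 : ℝ) 1) (hκ : κ ∈ Set.Ioo (Real.exp (-2)) 1) :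
    ∃! h : ℝ, h ∈ Set.Icc (0 : ℝ) 1 ∧
      ∀ h' ∈ Set.Icc (0 : ℝ) 1, s m κ h' ≤ s m κ h := by
  obtain ⟨hm0, hm1⟩ := hm
  obtain ⟨hκ2, hκ1⟩ := hκ
  have hκ0 : 0 < κ := (exp_pos _).trans hκ2
  set L : ℝ := Real.log κ with hLdef
  have hL0 : L < 0 := Real.log_neg hκ0 hκ1
  have hL2 : -2 < L := by
    have := Real.log_lt_log (exp_pos _) hκ2
    rwa [Real.log_exp] at this
  set f : ℝ → ℝ := fun h => m * exp (L * (1 - h) ^ 2) + (1 - m) * exp (L * h ^ 2) with hfdef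
  have hsf : ∀ h, s m κ h = f h := by
    intro h
    simp only [s, hfdef, Real.rpow_def_of_pos hκ0]
    rfl
  simp only [hsf]
  set g : ℝ → ℝ := fun x =>
    m * (1 - x) * exp (L * (1 - x) ^ 2) - (1 - m) * x * exp (L * x ^ 2) with hgdef
  have hcontf : Continuous f := by fun_prop
  have hderiv : ∀ x : ℝ, HasDerivAt f (2 * (-L) * g x) x := by
    intro x
    have d1 : HasDerivAt (fun h : ℝ => (1 - h) ^ 2) (2 * (1 - x) ^ 1 * (0 - 1)) x := by
      simpa using (((hasDerivAt_const x (1:ℝ)).sub (hasDerivAt_id x)).fun_pow 2)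
    have d2 : HasDerivAt (fun h : ℝ => L * (1 - h) ^ 2) (L * (2 * (1 - x) ^ 1 * (0 - 1))) x :=
      d1.const_mul L
    have d3 : HasDerivAt (fun h : ℝ => m * exp (L * (1 - h) ^ 2))
        (m * (exp (L * (1 - x) ^ 2) * (L * (2 * (1 - x) ^ 1 * (0 - 1))))) x :=
      (d2.exp).const_mul m
    have e1 : HasDerivAt (fun h : ℝ => h ^ 2) (2 * x ^ 1) x := by
      simpa using hasDerivAt_pow 2 x
    have e2 : HasDerivAt (fun h : ℝ => L * h ^ 2) (L * (2 * x ^ 1)) x := e1.const_mul L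
    have e3 : HasDerivAt (fun h : ℝ => (1 - m) * exp (L * h ^ 2))
        ((1 - m) * (exp (L * x ^ 2) * (L * (2 * x ^ 1)))) x :=
      (e2.exp).const_mul (1 - m)
    have : HasDerivAt f _ x := d3.fun_add e3
    convert this using 1
    simp only [hgdef]
    ring
  -- Generic step: from sign information about g, get the result
  have main : ∀ a : ℝ, 0 ≤ a → a ≤ 1 → (∀ x ∈ Ioo (0:ℝ) a, 0 < g x) →
      (∀ x ∈ Ioo a (1:ℝ), g x < 0) →
      ∃! h : ℝ, h ∈ Icc (0:ℝ) 1 ∧ ∀ h' ∈ Icc (0:ℝ) 1, f h' ≤ f h := by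
    intro a ha0 ha1 hpos hneg
    have hmono : StrictMonoOn f (Icc 0 a) := by
      apply strictMonoOn_of_deriv_pos (convex_Icc 0 a) hcontf.continuousOn
      intro x hx
      rw [interior_Icc] at hx
      rw [(hderiv x).deriv]
      have := hpos x hx
      nlinarith
    have hanti : StrictAntiOn f (Icc a 1) := by
      apply strictAntiOn_of_deriv_neg (convex_Icc a 1) hcontf.continuousOn
      intro x hx
      rw [interior_Icc] at hx
      rw [(hderiv x).deriv]
      have := hneg x hx
      nlinarith
    exact unimodal_unique ha0 ha1 hmono hanti
  rcases eq_or_lt_of_le hm0 with rfl | hm0'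
  · -- m = 0 : strictly decreasing, maximizer at 0
    refine main 0 le_rfl zero_le_one ?_ ?_
    · rintro x ⟨hx1, hx2⟩; exact absurd (hx1.trans hx2) (lt_irrefl _)
    · rintro x ⟨hx0, hx1⟩
      simp only [hgdef]
      have : 0 < x * exp (L * x ^ 2) := mul_pos hx0 (exp_pos _)
      nlinarith
  rcases eq_or_lt_of_le hm1 with rfl | hm1'
  · -- m = 1 : strictly increasing, maximizer at 1
    refine main 1 zero_le_one le_rfl ?_ ?_
    · rintro x ⟨hx0, hx1⟩
      simp only [hgdef]
      have : 0 < (1 - x) * exp (L * (1 - x) ^ 2) := mul_pos (by linarith) (exp_pos _)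
      nlinarith
    · rintro x ⟨hx1, hx2⟩; exact absurd (hx1.trans hx2) (lt_irrefl _)
  -- 0 < m < 1
  have hcontg : Continuous g := by fun_prop
  have hg0 : 0 < g 0 := by
    have h0 : g 0 = m * rexp L := by simp [hgdef]
    rw [h0]
    exact mul_pos hm0' (exp_pos _)
  have hg1 : g 1 < 0 := by
    have h1 : g 1 = -((1 - m) * rexp L) := by simp [hgdef]
    rw [h1]
    have := mul_pos (show (0:ℝ) < 1 - m by linarith) (exp_pos L)
    linarith
  obtain ⟨a, haI, hga⟩ : ∃ a ∈ Icc (0:ℝ) 1, g a = 0 := by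
    have h01 : (0:ℝ) ≤ 1 := zero_le_one
    have := intermediate_value_Icc' h01 hcontg.continuousOn (⟨hg1.le, hg0.le⟩ : (0:ℝ) ∈ Icc (g 1) (g 0))
    obtain ⟨a, haI, hga⟩ := this
    exact ⟨a, haI, hga⟩
  obtain ⟨ha0, ha1⟩ := haI
  have ha0' : 0 < a := by
    rcases eq_or_lt_of_le ha0 with rfl | h
    · exact absurd hga hg0.ne'
    · exact h
  have ha1' : a < 1 := by
    rcases eq_or_lt_of_le ha1 with rfl | h
    · exact absurd hga hg1.ne
    · exact h
  -- the "log ratio" function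
  set φ : ℝ → ℝ := fun h =>
    (Real.log m + Real.log (1 - h) + L * (1 - h) ^ 2) -
      (Real.log (1 - m) + Real.log h + L * h ^ 2) with hφdef
  have hgφ : ∀ x ∈ Ioo (0:ℝ) 1, g x =
      exp (Real.log m + Real.log (1 - x) + L * (1 - x) ^ 2) -
        exp (Real.log (1 - m) + Real.log x + L * x ^ 2) := by
    rintro x ⟨hx0, hx1⟩
    rw [exp_add, exp_add, exp_add, exp_add, exp_log hm0', exp_log (by linarith : (0:ℝ) < 1 - x),
      exp_log (by linarith : (0:ℝ) < 1 - m), exp_log hx0]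
  have hφanti : StrictAntiOn φ (Ioo 0 1) := by
    apply strictAntiOn_of_deriv_neg (convex_Ioo 0 1)
    · apply ContinuousOn.sub
      · apply ContinuousOn.add
        · apply ContinuousOn.add continuousOn_const
          exact ContinuousOn.log (by fun_prop)
            (fun x hx => ne_of_gt (by have := hx.2; simp only [mem_Ioo] at hx; linarith))
        · fun_prop
      · apply ContinuousOn.add
        · apply ContinuousOn.add continuousOn_const
          exact ContinuousOn.log (by fun_prop) (fun x hx => ne_of_gt hx.1)
        · fun_prop
    · intro x hx
      rw [interior_Ioo] at hx
      obtain ⟨hx0, hx1⟩ := hx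
      have hx1' : (0:ℝ) < 1 - x := by linarith
      have dlog1 : HasDerivAt (fun h : ℝ => Real.log (1 - h)) ((0 - 1) / (1 - x)) x :=
        HasDerivAt.log ((hasDerivAt_const x (1:ℝ)).sub (hasDerivAt_id x)) hx1'.ne'
      have dlog2 : HasDerivAt (fun h : ℝ => Real.log h) (1 / x) x := by
        simpa using (hasDerivAt_id x).log hx0.ne'
      have dsq1 : HasDerivAt (fun h : ℝ => L * (1 - h) ^ 2) (L * (2 * (1 - x) ^ 1 * (0 - 1))) x :=
        (by simpa using (((hasDerivAt_const x (1:ℝ)).sub (hasDerivAt_id x)).fun_pow 2) :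
          HasDerivAt (fun h : ℝ => (1 - h) ^ 2) (2 * (1 - x) ^ 1 * (0 - 1)) x).const_mul L
      have dsq2 : HasDerivAt (fun h : ℝ => L * h ^ 2) (L * (2 * x ^ 1)) x :=
        (by simpa using hasDerivAt_pow 2 x : HasDerivAt (fun h : ℝ => h ^ 2) (2 * x ^ 1) x).const_mul L
      have dφ : HasDerivAt φ
          (((0:ℝ) + (0 - 1) / (1 - x) + L * (2 * (1 - x) ^ 1 * (0 - 1))) -
            (0 + 1 / x + L * (2 * x ^ 1))) x := by
        exact (((hasDerivAt_const x (Real.log m)).add dlog1).add dsq1).sub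
          (((hasDerivAt_const x (Real.log (1 - m))).add dlog2).add dsq2)
      have hDeq : ((0:ℝ) + (0 - 1) / (1 - x) + L * (2 * (1 - x) ^ 1 * (0 - 1)) -
          (0 + 1 / x + L * (2 * x ^ 1))) = -(1 / (1 - x)) - 1 / x - 2 * L := by
        ring
      rw [dφ.deriv, hDeq]
      have hxx : 0 < x * (1 - x) := mul_pos hx0 hx1'
      have h4 : 4 ≤ 1 / x + 1 / (1 - x) := by
        rw [div_add_div _ _ hx0.ne' hx1'.ne', le_div_iff₀ hxx]
        nlinarith [sq_nonneg (2 * x - 1)]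
      linarith
  have hφa : φ a = 0 := by
    have := hgφ a ⟨ha0', ha1'⟩
    rw [hga] at this
    have heq := sub_eq_zero.mp this.symm
    have := Real.exp_injective heq
    simp only [hφdef]
    linarith [this.ge, this.le]
  refine main a ha0 ha1 ?_ ?_
  · rintro x ⟨hx0, hxa⟩
    have hxI : x ∈ Ioo (0:ℝ) 1 := ⟨hx0, hxa.trans ha1'⟩
    have hφx : 0 < φ x := by
      have := hφanti hxI ⟨ha0', ha1'⟩ hxa
      rwa [hφa] at this
    rw [hgφ x hxI]
    have : Real.log (1 - m) + Real.log x + L * x ^ 2 <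
        Real.log m + Real.log (1 - x) + L * (1 - x) ^ 2 := by
      simp only [hφdef] at hφx; linarith
    have := Real.exp_lt_exp.mpr this
    linarith
  · rintro x ⟨hax, hx1⟩
    have hxI : x ∈ Ioo (0:ℝ) 1 := ⟨ha0'.trans hax, hx1⟩
    have hφx : φ x < 0 := by
      have := hφanti ⟨ha0', ha1'⟩ hxI hax
      rwa [hφa] at this
    rw [hgφ x hxI]
    have : Real.log m + Real.log (1 - x) + L * (1 - x) ^ 2 <
        Real.log (1 - m) + Real.log x + L * x ^ 2 := by
      simp only [hφdef] at hφx; linarith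
    have := Real.exp_lt_exp.mpr this
    linarith
end

section
/- Nonnegativity of the weight degradation: for every m ∈ [0,1], κ ∈ (0,1) and h ∈ [0,1], the inequality (m·κ^{(1−h)²} + (1−m)·κ^{h²})² ≤ m² + (1−m)² + 2m(1−m)κ holds; consequently WD(m,κ) = m² + (1−m)² + 2m(1−m)κ − (sup_{h ∈ [0,1]} s_{m,κ}(h))² ≥ 0. -/
open Real Nat

-- superadditivity of cosh ∘ sqrt, via power series
lemma coshK (x y : ℝ) (hx : 0 ≤ x) (hy : 0 ≤ y) :
    Real.cosh (Real.sqrt x) + Real.cosh (Real.sqrt y) ≤ 1 + Real.cosh (Real.sqrt (x + y)) := by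
  have hs : ∀ z : ℝ, 0 ≤ z → HasSum (fun n : ℕ => z ^ n / ((2 * n)! : ℝ)) (Real.cosh (Real.sqrt z)) := by
    intro z hz
    have h := Real.hasSum_cosh (Real.sqrt z)
    simpa [pow_mul, Real.sq_sqrt hz] using h
  have hL : HasSum (fun n : ℕ => x ^ n / ((2 * n)! : ℝ) + y ^ n / ((2 * n)! : ℝ))
      (Real.cosh (Real.sqrt x) + Real.cosh (Real.sqrt y)) := (hs x hx).add (hs y hy)
  have hR : HasSum (fun n : ℕ => (if n = 0 then (1 : ℝ) else 0) + (x + y) ^ n / ((2 * n)! : ℝ))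
      (1 + Real.cosh (Real.sqrt (x + y))) :=
    (hasSum_ite_eq 0 1).add (hs _ (by linarith))
  refine hasSum_le (fun n => ?_) hL hR
  rcases n with _ | n
  · simp
  · have hp : x ^ (n + 1) + y ^ (n + 1) ≤ (x + y) ^ (n + 1) :=
      pow_add_pow_le hx hy (Nat.succ_ne_zero n)
    have hfac : (0 : ℝ) < ((2 * (n + 1))! : ℝ) := by positivity
    rw [if_neg (Nat.succ_ne_zero n), zero_add, ← add_div]
    gcongr

-- "multiplicative midpoint convexity" of sinh
lemma sinhM (x y : ℝ) (hx : 0 ≤ x) (hy : 0 ≤ y) :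
    Real.sinh (Real.sqrt (x * y)) ^ 2 ≤ Real.sinh x * Real.sinh y := by
  have hK := coshK ((x - y) ^ 2) (4 * (x * y)) (sq_nonneg _) (by positivity)
  have s1 : Real.sqrt ((x - y) ^ 2) = |x - y| := Real.sqrt_sq_eq_abs _
  have s2 : Real.sqrt ((x - y) ^ 2 + 4 * (x * y)) = x + y := by
    rw [show (x - y) ^ 2 + 4 * (x * y) = (x + y) ^ 2 by ring, Real.sqrt_sq (by linarith)]
  have s3 : Real.sqrt (4 * (x * y)) = 2 * Real.sqrt (x * y) := by
    rw [show (4 : ℝ) * (x * y) = 2 ^ 2 * (x * y) by ring, Real.sqrt_mul (by positivity),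
      Real.sqrt_sq (by norm_num)]
  rw [s1, s2, s3, Real.cosh_abs] at hK
  have i1 : Real.cosh (2 * Real.sqrt (x * y)) = 2 * Real.sinh (Real.sqrt (x * y)) ^ 2 + 1 := by
    rw [Real.cosh_two_mul, Real.cosh_sq]; ring
  have i2 : Real.cosh (x + y) - Real.cosh (x - y) = 2 * (Real.sinh x * Real.sinh y) := by
    rw [Real.cosh_add, Real.cosh_sub]; ring
  linarith

-- 1 - exp(-u)^2 = 2 exp(-u) sinh u
lemma one_sub_exp_sq (u : ℝ) :
    1 - Real.exp (-u) ^ 2 = 2 * Real.exp (-u) * Real.sinh u := by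
  have h := Real.exp_ne_zero u
  rw [Real.sinh_eq, Real.exp_neg]
  field_simp

-- the 3x3 Gaussian Gram determinant condition, exponential form
lemma expD (t h : ℝ) (ht : 0 ≤ t) (hh0 : 0 ≤ h) (hh1 : h ≤ 1) :
    Real.exp (-(t * (1 - h) ^ 2)) ^ 2 + Real.exp (-(t * h ^ 2)) ^ 2 + Real.exp (-t) ^ 2
      ≤ 1 + 2 * Real.exp (-(t * (1 - h) ^ 2)) * Real.exp (-(t * h ^ 2)) * Real.exp (-t) := by
  set A := Real.exp (-(t * (1 - h) ^ 2)) with hA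
  set B := Real.exp (-(t * h ^ 2)) with hB
  set C := Real.exp (-t) with hC
  -- Claim: (A - B*C)^2 ≤ (1 - B^2) * (1 - C^2)
  have hM : Real.sinh (t * h) ^ 2 ≤ Real.sinh (t * h ^ 2) * Real.sinh t := by
    have h2 := sinhM (t * h ^ 2) t (by positivity) ht
    rwa [show t * h ^ 2 * t = (t * h) ^ 2 by ring, Real.sqrt_sq (by positivity)] at h2
  have hBC' : B * C = A * Real.exp (-(2 * (t * h))) := by
    rw [hA, hB, hC, ← Real.exp_add, ← Real.exp_add]
    congr 1
    ring
  have hsq : Real.exp (-(2 * (t * h))) = Real.exp (-(t * h)) ^ 2 := by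
    rw [sq, ← Real.exp_add]
    congr 1
    ring
  have hABC : A - B * C = A * (2 * Real.exp (-(t * h)) * Real.sinh (t * h)) := by
    rw [hBC', hsq, ← one_sub_exp_sq (t * h)]
    ring
  have hBC2 : (1 - B ^ 2) * (1 - C ^ 2)
      = 4 * (Real.exp (-(t * h ^ 2)) * Real.exp (-t)) * (Real.sinh (t * h ^ 2) * Real.sinh t) := by
    rw [hB, hC, one_sub_exp_sq, one_sub_exp_sq]; ring
  have hexp : (A * Real.exp (-(t * h))) ^ 2 ≤ Real.exp (-(t * h ^ 2)) * Real.exp (-t) := by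
    rw [hA, ← Real.exp_add, sq, ← Real.exp_add, ← Real.exp_add]
    apply Real.exp_le_exp.2
    nlinarith [mul_nonneg ht (sq_nonneg (1 - h))]
  have hclaim : (A - B * C) ^ 2 ≤ (1 - B ^ 2) * (1 - C ^ 2) := by
    rw [hABC, hBC2]
    have e1 : (A * (2 * Real.exp (-(t * h)) * Real.sinh (t * h))) ^ 2
        = 4 * (A * Real.exp (-(t * h))) ^ 2 * Real.sinh (t * h) ^ 2 := by ring
    rw [e1]
    have h1 : 4 * (A * Real.exp (-(t * h))) ^ 2 * Real.sinh (t * h) ^ 2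
        ≤ 4 * (Real.exp (-(t * h ^ 2)) * Real.exp (-t)) * Real.sinh (t * h) ^ 2 := by
      have := sq_nonneg (Real.sinh (t * h))
      nlinarith [hexp]
    have h2 : 4 * (Real.exp (-(t * h ^ 2)) * Real.exp (-t)) * Real.sinh (t * h) ^ 2
        ≤ 4 * (Real.exp (-(t * h ^ 2)) * Real.exp (-t)) * (Real.sinh (t * h ^ 2) * Real.sinh t) :=
      mul_le_mul_of_nonneg_left hM (by positivity)
    linarith
  nlinarith [hclaim]

set_option maxHeartbeats 1000000 in
lemma pointwise (m κ h : ℝ) (hm0 : 0 ≤ m) (hm1 : m ≤ 1) (hκ0 : 0 < κ) (hκ1 : κ < 1)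
    (hh0 : 0 ≤ h) (hh1 : h ≤ 1) :
    (m * κ ^ ((1 - h) ^ 2) + (1 - m) * κ ^ (h ^ 2)) ^ 2
      ≤ m ^ 2 + (1 - m) ^ 2 + 2 * m * (1 - m) * κ := by
  set a := κ ^ ((1 - h) ^ 2) with ha
  set b := κ ^ (h ^ 2) with hb
  have ha0 : 0 < a := Real.rpow_pos_of_pos hκ0 _
  have hb0 : 0 < b := Real.rpow_pos_of_pos hκ0 _
  have ha1 : a ≤ 1 := Real.rpow_le_one hκ0.le hκ1.le (by positivity)
  have hb1 : b ≤ 1 := Real.rpow_le_one hκ0.le hκ1.le (by positivity)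
  -- express via exp to get the Gram determinant inequality
  set t := -Real.log κ with htdef
  have ht : 0 < t := by
    have := Real.log_neg hκ0 hκ1
    simp only [htdef]; linarith
  have hκe : κ = Real.exp (-t) := by
    rw [htdef, neg_neg, Real.exp_log hκ0]
  have hae : a = Real.exp (-(t * (1 - h) ^ 2)) := by
    rw [ha, Real.rpow_def_of_pos hκ0]
    congr 1
    rw [htdef]; ring
  have hbe : b = Real.exp (-(t * h ^ 2)) := by
    rw [hb, Real.rpow_def_of_pos hκ0]
    congr 1
    rw [htdef]; ring
  have hD : a ^ 2 + b ^ 2 + κ ^ 2 ≤ 1 + 2 * a * b * κ := by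
    rw [hae, hbe, hκe]
    exact expD t h ht.le hh0 hh1
  -- Cauchy–Schwarz style finish
  have hXY : (a * b - κ) ^ 2 ≤ (1 - a ^ 2) * (1 - b ^ 2) := by nlinarith [hD]
  have hX0 : 0 ≤ 1 - a ^ 2 := by nlinarith
  have hY0 : 0 ≤ 1 - b ^ 2 := by nlinarith
  have h2 : a * b - κ ≤ Real.sqrt (1 - a ^ 2) * Real.sqrt (1 - b ^ 2) := by
    have hs := Real.sqrt_le_sqrt hXY
    rw [Real.sqrt_sq_eq_abs, Real.sqrt_mul hX0] at hs
    exact (le_abs_self _).trans hs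
  have h4 : 2 * (m * Real.sqrt (1 - a ^ 2)) * ((1 - m) * Real.sqrt (1 - b ^ 2))
      ≤ (m * Real.sqrt (1 - a ^ 2)) ^ 2 + ((1 - m) * Real.sqrt (1 - b ^ 2)) ^ 2 :=
    two_mul_le_add_sq _ _
  have sa : Real.sqrt (1 - a ^ 2) ^ 2 = 1 - a ^ 2 := Real.sq_sqrt hX0
  have sb : Real.sqrt (1 - b ^ 2) ^ 2 = 1 - b ^ 2 := Real.sq_sqrt hY0
  have h3 : 2 * m * (1 - m) * (a * b - κ)
      ≤ 2 * m * (1 - m) * (Real.sqrt (1 - a ^ 2) * Real.sqrt (1 - b ^ 2)) := by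
    apply mul_le_mul_of_nonneg_left h2
    nlinarith
  have h4' := h4
  rw [mul_pow, mul_pow, sa, sb] at h4'
  have heq : 2 * (m * Real.sqrt (1 - a ^ 2)) * ((1 - m) * Real.sqrt (1 - b ^ 2))
      = 2 * m * (1 - m) * (Real.sqrt (1 - a ^ 2) * Real.sqrt (1 - b ^ 2)) := by ring
  rw [heq] at h4'
  linarith [h3, h4']


noncomputable def WD (m κ : ℝ) : ℝ :=
  m ^ 2 + (1 - m) ^ 2 + 2 * m * (1 - m) * κ - (sSup (s m κ '' Set.Icc 0 1)) ^ 2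

theorem weight_degradation_nonneg (m κ : ℝ)
    (hm : m ∈ Set.Icc (0 : ℝ) 1) (hκ : κ ∈ Set.Ioo (0 : ℝ) 1) :
    (∀ h ∈ Set.Icc (0 : ℝ) 1,
      (s m κ h) ^ 2 ≤ m ^ 2 + (1 - m) ^ 2 + 2 * m * (1 - m) * κ) ∧
    0 ≤ WD m κ := by
  obtain ⟨hm0, hm1⟩ := hm
  obtain ⟨hκ0, hκ1⟩ := hκ
  have hpt : ∀ h ∈ Set.Icc (0 : ℝ) 1,
      (s m κ h) ^ 2 ≤ m ^ 2 + (1 - m) ^ 2 + 2 * m * (1 - m) * κ := by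
    intro h hh
    have := pointwise m κ h hm0 hm1 hκ0 hκ1 hh.1 hh.2
    simpa [s] using this
  refine ⟨hpt, ?_⟩
  have hR0 : 0 ≤ m ^ 2 + (1 - m) ^ 2 + 2 * m * (1 - m) * κ := by
    have h1 : 0 ≤ 2 * m * (1 - m) * κ := by
      apply mul_nonneg _ hκ0.le
      apply mul_nonneg _ (by linarith : (0 : ℝ) ≤ 1 - m)
      linarith
    nlinarith [sq_nonneg m, sq_nonneg (1 - m)]
  have hs0 : ∀ h ∈ Set.Icc (0 : ℝ) 1, 0 ≤ s m κ h := by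
    intro h _
    have h1 : 0 < κ ^ ((1 - h) ^ 2) := Real.rpow_pos_of_pos hκ0 _
    have h2 : 0 < κ ^ (h ^ 2) := Real.rpow_pos_of_pos hκ0 _
    have h3 : 0 ≤ 1 - m := by linarith
    simp only [s]
    have := mul_nonneg hm0 h1.le
    have := mul_nonneg h3 h2.le
    linarith
  have h0mem : (0 : ℝ) ∈ Set.Icc (0 : ℝ) 1 := ⟨le_refl 0, by norm_num⟩
  have hne : (s m κ '' Set.Icc 0 1).Nonempty := ⟨s m κ 0, Set.mem_image_of_mem _ h0mem⟩
  have hbdd : ∀ x ∈ s m κ '' Set.Icc 0 1,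
      x ≤ Real.sqrt (m ^ 2 + (1 - m) ^ 2 + 2 * m * (1 - m) * κ) := by
    rintro x ⟨h, hh, rfl⟩
    calc s m κ h = Real.sqrt ((s m κ h) ^ 2) := (Real.sqrt_sq (hs0 h hh)).symm
      _ ≤ Real.sqrt (m ^ 2 + (1 - m) ^ 2 + 2 * m * (1 - m) * κ) :=
          Real.sqrt_le_sqrt (hpt h hh)
  have hsup_le : sSup (s m κ '' Set.Icc 0 1)
      ≤ Real.sqrt (m ^ 2 + (1 - m) ^ 2 + 2 * m * (1 - m) * κ) := csSup_le hne hbdd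
  have hsup_ge : 0 ≤ sSup (s m κ '' Set.Icc 0 1) := by
    have hb : BddAbove (s m κ '' Set.Icc 0 1) := ⟨_, hbdd⟩
    exact le_trans (hs0 0 h0mem) (le_csSup hb (Set.mem_image_of_mem _ h0mem))
  have hfin : (sSup (s m κ '' Set.Icc 0 1)) ^ 2
      ≤ m ^ 2 + (1 - m) ^ 2 + 2 * m * (1 - m) * κ := by
    have h := pow_le_pow_left₀ hsup_ge hsup_le 2
    rwa [Real.sq_sqrt hR0] at h
  simp only [WD]
  linarith
end
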